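/- Suppose k is a finite field equipped with the trivial absolute value or a local field. Then every maximal ideal m of C_bd(X,k) has codimension 1; that is, the composite k-algebra homomorphism k → C_bd(X,k) → C_bd(X,k)/m is bijective. -/

import Mathlib

/-- `k` is a finite field equipped with the trivial absolute value. -/
def IsTriviallyValuedFiniteField (k : Type*) [NormedField k] : Prop :=
  Finite k ∧ ∀ a : k, a ≠ 0 → ‖a‖ = 1

/-- `k` is a nonarchimedean local field: together with an ambient completeness assumption,
this says that `k` is a complete discretely valued field (the value group of `k` is generated
by the norm of a uniformizer `π`) whose residue field is finite (the unit ball is covered by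
finitely many open unit balls). -/
def IsNALocalField (k : Type*) [NormedField k] : Prop :=
  (∃ π : k, 0 < ‖π‖ ∧ ‖π‖ < 1 ∧ ∀ a : k, a ≠ 0 → ∃ n : ℤ, ‖a‖ = ‖π‖ ^ n) ∧
  (∃ S : Finset k, ∀ a : k, ‖a‖ ≤ 1 → ∃ s ∈ S, ‖a - s‖ < 1)

open BoundedContinuousFunction Classical
noncomputable section
namespace Codim1Aux
variable {X : Type*} [TopologicalSpace X] {k : Type*} [NormedField k]

/-- The indicator function of a clopen set as a bounded continuous function. -/
def clopenIndicator (U : Set X) (hU : IsClopen U) :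
    BoundedContinuousFunction X k :=
  BoundedContinuousFunction.ofNormedAddCommGroup
    (fun x => if x ∈ U then (1 : k) else 0)
    (by
      classical
      refine continuous_if (fun a ha => ?_) continuous_const.continuousOn
        continuous_const.continuousOn
      rw [show {x | x ∈ U} = U from rfl, hU.frontier_eq] at ha
      exact absurd ha (Set.notMem_empty a))
    1 (by intro x; split <;> simp)

@[simp] lemma clopenIndicator_apply (U : Set X) (hU : IsClopen U) (x : X) :
    (clopenIndicator U hU : BoundedContinuousFunction X k) x
      = if x ∈ U then (1 : k) else 0 := rfl

/-- Evaluation at a point as a ring homomorphism. -/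
def evalRingHom (x : X) : BoundedContinuousFunction X k →+* k where
  toFun g := g x
  map_one' := rfl
  map_mul' _ _ := rfl
  map_zero' := rfl
  map_add' _ _ := rfl

/-- Key approximation step: if the values of `f` are covered by closed balls of radius `r`
centered in a finite set `T` (and these balls are open), then modulo `m`, `f` is within `r`
of a constant from `T`, whose ball moreover meets the closure of the range of `f`. -/
theorem key_step (m : Ideal (BoundedContinuousFunction X k)) (hm : m.IsMaximal)
    (f : BoundedContinuousFunction X k) (T : Finset k) {r : ℝ} (hr : 0 ≤ r)
    (hop : ∀ t : k, IsOpen (Metric.closedBall t r))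
    (hcov : ∀ x : X, ∃ t ∈ T, ‖f x - t‖ ≤ r) :
    ∃ c ∈ T, (∃ x : X, ‖f x - c‖ ≤ r) ∧ ∃ h ∈ m,
      ‖f - algebraMap k (BoundedContinuousFunction X k) c - h‖ ≤ r ∧
      ‖h‖ ≤ ‖f - algebraMap k (BoundedContinuousFunction X k) c‖ := by
  classical
  haveI := hm
  have hUclopen : ∀ t : k, IsClopen (f ⁻¹' Metric.closedBall t r) := fun t =>
    ⟨Metric.isClosed_closedBall.preimage f.continuous, (hop t).preimage f.continuous⟩
  set e : k → BoundedContinuousFunction X k :=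
    fun t => clopenIndicator (f ⁻¹' Metric.closedBall t r) (hUclopen t) with he
  have hmem_iff : ∀ (t : k) (x : X), x ∈ f ⁻¹' Metric.closedBall t r ↔ ‖f x - t‖ ≤ r := by
    intro t x
    simp [Metric.mem_closedBall, dist_eq_norm]
  have hprod : (∏ t ∈ T, (1 - e t)) = 0 := by
    ext x
    show evalRingHom x (∏ t ∈ T, (1 - e t)) = (0 : BoundedContinuousFunction X k) x
    rw [map_prod (evalRingHom x) (fun t => 1 - e t) T, coe_zero, Pi.zero_apply]
    obtain ⟨t, htT, ht⟩ := hcov x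
    refine Finset.prod_eq_zero htT ?_
    have hx : x ∈ f ⁻¹' Metric.closedBall t r := (hmem_iff t x).mpr ht
    show (1 - e t) x = 0
    simp [he, hx]
  have h0 : (∏ t ∈ T, (1 - e t)) ∈ m := hprod ▸ m.zero_mem
  obtain ⟨c, hcT, hcm⟩ := (Ideal.IsPrime.prod_mem_iff).mp h0
  refine ⟨c, hcT, ?_, ?_⟩
  · by_contra hempty
    push_neg at hempty
    have hec : e c = 0 := by
      ext x
      have hnx : ¬ x ∈ f ⁻¹' Metric.closedBall c r := fun hx =>
        absurd ((hmem_iff c x).mp hx) (not_le.mpr (hempty x))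
      simp [he, hnx]
    rw [hec, sub_zero] at hcm
    exact hm.ne_top ((Ideal.eq_top_iff_one m).mpr hcm)
  · set g := f - algebraMap k (BoundedContinuousFunction X k) c with hg
    refine ⟨g * (1 - e c), m.mul_mem_left g hcm, ?_, ?_⟩
    · have hid : g - g * (1 - e c) = g * e c := by ring
      rw [hid]
      refine (norm_le hr).mpr fun x => ?_
      by_cases hx : x ∈ f ⁻¹' Metric.closedBall c r
      · have : ‖f x - c‖ ≤ r := (hmem_iff c x).mp hx
        calc ‖(g * e c) x‖ = ‖g x * (e c) x‖ := rfl
          _ = ‖g x‖ * ‖(e c) x‖ := norm_mul _ _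
          _ ≤ r := by
            simp only [he, clopenIndicator_apply, hx, if_pos, norm_one, mul_one]
            simpa [hg, Algebra.algebraMap_eq_smul_one] using this
      · calc ‖(g * e c) x‖ = ‖g x * (e c) x‖ := rfl
          _ = 0 := by simp [he, hx]
          _ ≤ r := hr
    · refine (norm_le (norm_nonneg g)).mpr fun x => ?_
      calc ‖(g * (1 - e c)) x‖ = ‖g x‖ * ‖(1 - e c) x‖ := norm_mul _ _
        _ ≤ ‖g‖ * 1 := by
          refine mul_le_mul (norm_coe_le_norm g x) ?_ (norm_nonneg _) (norm_nonneg _)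
          by_cases hx : x ∈ f ⁻¹' Metric.closedBall c r <;> simp [he, hx]
        _ = ‖g‖ := mul_one _

/-- In the trivially valued finite field case, every bounded continuous function is
congruent to a constant modulo a maximal ideal. -/
theorem exists_triv (hfin : Finite k) (htriv : ∀ a : k, a ≠ 0 → ‖a‖ = 1)
    (m : Ideal (BoundedContinuousFunction X k)) (hm : m.IsMaximal)
    (f : BoundedContinuousFunction X k) :
    ∃ c : k, f - algebraMap k (BoundedContinuousFunction X k) c ∈ m := by
  haveI : Fintype k := Fintype.ofFinite k
  have hop : ∀ t : k, IsOpen (Metric.closedBall t (0 : ℝ)) := by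
    intro t
    have hball : Metric.ball t (1 : ℝ) = Metric.closedBall t 0 := by
      ext a
      simp only [Metric.mem_ball, Metric.mem_closedBall, dist_eq_norm]
      constructor
      · intro h
        rcases eq_or_ne a t with rfl | hne
        · simp
        · rw [htriv _ (sub_ne_zero.mpr hne)] at h; linarith
      · intro h; linarith
    rw [← hball]; exact Metric.isOpen_ball
  obtain ⟨c, -, -, h, hhm, hle, -⟩ := key_step m hm f Finset.univ le_rfl hop
    (fun x => ⟨f x, Finset.mem_univ _, by simp⟩)
  have h0 : f - algebraMap k (BoundedContinuousFunction X k) c - h = 0 :=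
    norm_le_zero_iff.mp hle
  exact ⟨c, sub_eq_zero.mp h0 ▸ hhm⟩

/-- A single approximation step in the local field case. -/
theorem local_step [IsUltrametricDist k]
    {π : k} (hπ0 : 0 < ‖π‖) (hπ1 : ‖π‖ < 1)
    (hval : ∀ a : k, a ≠ 0 → ∃ n : ℤ, ‖a‖ = ‖π‖ ^ n)
    {S : Finset k} (hS : ∀ a : k, ‖a‖ ≤ 1 → ∃ s ∈ S, ‖a - s‖ < 1)
    (m : Ideal (BoundedContinuousFunction X k)) (hm : m.IsMaximal)
    (g : BoundedContinuousFunction X k) :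
    ∃ c : k, ∃ h : BoundedContinuousFunction X k, h ∈ m ∧
      ‖g - algebraMap k (BoundedContinuousFunction X k) c - h‖ ≤ ‖π‖ * ‖g‖ ∧
      ‖c‖ ≤ ‖π‖⁻¹ * ‖g‖ ∧ ‖h‖ ≤ ‖π‖⁻¹ * ‖g‖ := by
  have hπne : π ≠ 0 := fun h => by simp [h] at hπ0
  have hinv : ‖π‖ * ‖π‖⁻¹ = 1 := mul_inv_cancel₀ (ne_of_gt hπ0)
  have hπinv0 : 0 < ‖π‖⁻¹ := inv_pos.mpr hπ0
  have h1π : (1 : ℝ) ≤ ‖π‖⁻¹ := by nlinarith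
  have hle_pi : ∀ v : k, ‖v‖ < 1 → ‖v‖ ≤ ‖π‖ := by
    intro v hv
    rcases eq_or_ne v 0 with rfl | hne
    · simpa using hπ0.le
    obtain ⟨n, hn⟩ := hval v hne
    rw [hn] at hv ⊢
    have h1 : (1 : ℤ) ≤ n := by
      by_contra hcon
      push_neg at hcon
      have : (1 : ℝ) ≤ ‖π‖ ^ n := by
        calc (1 : ℝ) = ‖π‖ ^ (0 : ℤ) := (zpow_zero _).symm
          _ ≤ ‖π‖ ^ n := zpow_le_zpow_right_of_le_one₀ hπ0 hπ1.le (by omega)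
      linarith
    calc ‖π‖ ^ n ≤ ‖π‖ ^ (1 : ℤ) := zpow_le_zpow_right_of_le_one₀ hπ0 hπ1.le h1
      _ = ‖π‖ := zpow_one _
  have hS' : ∀ a : k, ‖a‖ ≤ 1 → ∃ s ∈ S, ‖a - s‖ ≤ ‖π‖ := fun a ha => by
    obtain ⟨s, hsS, hs⟩ := hS a ha
    exact ⟨s, hsS, hle_pi _ hs⟩
  rcases eq_or_ne g 0 with rfl | hg0
  · exact ⟨0, 0, m.zero_mem, by simp, by simp, by simp⟩
  have hgpos : 0 < ‖g‖ := norm_pos_iff.mpr hg0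
  obtain ⟨x0, hx0⟩ : ∃ x0, ‖π‖ * ‖g‖ < ‖g x0‖ := by
    by_contra hcon
    push_neg at hcon
    have : ‖g‖ ≤ ‖π‖ * ‖g‖ := (norm_le (by positivity)).mpr hcon
    nlinarith
  have hgx0 : g x0 ≠ 0 := by
    intro h
    rw [h, norm_zero] at hx0
    nlinarith
  obtain ⟨n, hn⟩ := hval (g x0) hgx0
  set u : k := π ^ (n - 1) with hu
  have hune : u ≠ 0 := zpow_ne_zero _ hπne
  have hnu : ‖u‖ = ‖g x0‖ * ‖π‖⁻¹ := by
    rw [hu, norm_zpow, zpow_sub_one₀ (ne_of_gt hπ0), hn]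
  have hgu : ‖g‖ < ‖u‖ := by
    rw [hnu]
    calc ‖g‖ = (‖π‖ * ‖g‖) * ‖π‖⁻¹ := by field_simp
      _ < ‖g x0‖ * ‖π‖⁻¹ := mul_lt_mul_of_pos_right hx0 hπinv0
  have huf2 : ‖u‖ ≤ ‖π‖⁻¹ * ‖g‖ := by
    rw [hnu]
    calc ‖g x0‖ * ‖π‖⁻¹ ≤ ‖g‖ * ‖π‖⁻¹ :=
        mul_le_mul_of_nonneg_right (norm_coe_le_norm g x0) hπinv0.le
      _ = ‖π‖⁻¹ * ‖g‖ := mul_comm _ _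
  set T : Finset k := (S ×ˢ S).image (fun p => u * p.1 + u * π * p.2) with hT
  set r : ℝ := ‖π‖ ^ 2 * ‖u‖ with hr
  have hrpos : 0 < r := by
    have : 0 < ‖u‖ := norm_pos_iff.mpr hune
    positivity
  have hop : ∀ t : k, IsOpen (Metric.closedBall t r) :=
    fun t => IsUltrametricDist.isOpen_closedBall t (ne_of_gt hrpos)
  have hcov : ∀ x : X, ∃ t ∈ T, ‖g x - t‖ ≤ r := by
    intro x
    have hx : ‖g x / u‖ ≤ 1 := by
      rw [norm_div]
      exact div_le_one_of_le₀ (le_trans (norm_coe_le_norm g x) hgu.le) (norm_nonneg u)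
    obtain ⟨s1, hs1S, hs1⟩ := hS' _ hx
    have hb : ‖(g x / u - s1) / π‖ ≤ 1 := by
      rw [norm_div]
      exact div_le_one_of_le₀ hs1 (norm_nonneg π)
    obtain ⟨s2, hs2S, hs2⟩ := hS' _ hb
    refine ⟨u * s1 + u * π * s2,
      Finset.mem_image.mpr ⟨(s1, s2), Finset.mem_product.mpr ⟨hs1S, hs2S⟩, rfl⟩, ?_⟩
    have hkey : g x - (u * s1 + u * π * s2) = u * π * ((g x / u - s1) / π - s2) := by
      field_simp
      ring
    rw [hkey, norm_mul, norm_mul]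
    refine le_trans
      (mul_le_mul_of_nonneg_left hs2 (mul_nonneg (norm_nonneg u) (norm_nonneg π)))
      (le_of_eq (by rw [hr]; ring))
  obtain ⟨c, hcT, ⟨x1, hx1⟩, h, hhm, hle, hnh⟩ := key_step m hm g T hrpos.le hop hcov
  have hrle : r ≤ ‖π‖ * ‖g‖ := by
    calc r = ‖π‖ ^ 2 * ‖u‖ := hr
      _ ≤ ‖π‖ ^ 2 * (‖π‖⁻¹ * ‖g‖) := mul_le_mul_of_nonneg_left huf2 (by positivity)
      _ = ‖π‖ * (‖π‖ * ‖π‖⁻¹) * ‖g‖ := by ring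
      _ = ‖π‖ * ‖g‖ := by rw [hinv]; ring
  have hcbound : ‖c‖ ≤ ‖π‖⁻¹ * ‖g‖ := by
    have h1 : ‖c‖ = ‖(c - g x1) + g x1‖ := by ring_nf
    have h2 : ‖(c - g x1) + g x1‖ ≤ max ‖c - g x1‖ ‖g x1‖ :=
      IsUltrametricDist.norm_add_le_max _ _
    have h3 : ‖c - g x1‖ ≤ r := by rw [norm_sub_rev]; exact hx1
    have h4 : ‖g x1‖ ≤ ‖g‖ := norm_coe_le_norm g x1
    have h5 : ‖g‖ ≤ ‖π‖⁻¹ * ‖g‖ := by nlinarith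
    have h6 : r ≤ ‖π‖⁻¹ * ‖g‖ := le_trans hrle (by nlinarith)
    rw [h1]
    exact le_trans h2 (max_le (le_trans h3 h6) (le_trans h4 h5))
  refine ⟨c, h, hhm, le_trans hle hrle, hcbound, ?_⟩
  refine le_trans hnh ((norm_le (by positivity)).mpr fun x => ?_)
  have hgc : (g - algebraMap k (BoundedContinuousFunction X k) c) x = g x - c := by
    simp [Algebra.algebraMap_eq_smul_one]
  rw [hgc]
  have h2 : ‖g x - c‖ ≤ max ‖g x‖ ‖c‖ := by
    have := IsUltrametricDist.norm_add_le_max (g x) (-c)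
    simpa [sub_eq_add_neg] using this
  have h4 : ‖g x‖ ≤ ‖g‖ := norm_coe_le_norm g x
  have h5 : ‖g‖ ≤ ‖π‖⁻¹ * ‖g‖ := by nlinarith
  exact le_trans h2 (max_le (le_trans h4 h5) hcbound)

/-- In the local field case, every bounded continuous function is congruent to a constant
modulo a maximal ideal. -/
theorem exists_local [IsUltrametricDist k] [CompleteSpace k]
    (hk : IsNALocalField k)
    (m : Ideal (BoundedContinuousFunction X k)) (hm : m.IsMaximal)
    (f : BoundedContinuousFunction X k) :
    ∃ c : k, f - algebraMap k (BoundedContinuousFunction X k) c ∈ m := by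
  obtain ⟨⟨π, hπ0, hπ1, hval⟩, S, hS⟩ := hk
  have step := fun g => local_step hπ0 hπ1 hval hS m hm g
  choose cf hf hfm hfle hfc hfh using step
  set F : ℕ → BoundedContinuousFunction X k :=
    fun j => Nat.recAux f
      (fun _ g => g - algebraMap k (BoundedContinuousFunction X k) (cf g) - hf g) j with hF
  have hF0 : F 0 = f := rfl
  have hFsucc : ∀ j, F (j + 1)
      = F j - algebraMap k (BoundedContinuousFunction X k) (cf (F j)) - hf (F j) :=
    fun j => rfl
  have hFnorm : ∀ j, ‖F j‖ ≤ ‖π‖ ^ j * ‖f‖ := by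
    intro j
    induction j with
    | zero => simp [hF0]
    | succ j ih =>
      calc ‖F (j + 1)‖ ≤ ‖π‖ * ‖F j‖ := by rw [hFsucc]; exact hfle (F j)
        _ ≤ ‖π‖ * (‖π‖ ^ j * ‖f‖) := mul_le_mul_of_nonneg_left ih hπ0.le
        _ = ‖π‖ ^ (j + 1) * ‖f‖ := by ring
  have hcnorm : ∀ j, ‖cf (F j)‖ ≤ (‖π‖⁻¹ * ‖f‖) * ‖π‖ ^ j := by
    intro j
    calc ‖cf (F j)‖ ≤ ‖π‖⁻¹ * ‖F j‖ := hfc (F j)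
      _ ≤ ‖π‖⁻¹ * (‖π‖ ^ j * ‖f‖) :=
        mul_le_mul_of_nonneg_left (hFnorm j) (inv_pos.mpr hπ0).le
      _ = (‖π‖⁻¹ * ‖f‖) * ‖π‖ ^ j := by ring
  have hsummable : Summable (fun j => cf (F j)) :=
    Summable.of_norm_bounded
      ((summable_geometric_of_lt_one (norm_nonneg π) hπ1).mul_left (‖π‖⁻¹ * ‖f‖)) hcnorm
  set Ctot : k := ∑' j, cf (F j) with hCtot
  have htend : Filter.Tendsto (fun jn => ∑ i ∈ Finset.range jn, cf (F i))
      Filter.atTop (nhds Ctot) := hsummable.hasSum.tendsto_sum_nat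
  have hid : ∀ j, (∑ i ∈ Finset.range j, hf (F i))
      = f - algebraMap k (BoundedContinuousFunction X k) (∑ i ∈ Finset.range j, cf (F i))
        - F j := by
    intro j
    induction j with
    | zero => simp [hF0]
    | succ j ih =>
      rw [Finset.sum_range_succ, Finset.sum_range_succ, ih, map_add, hFsucc]
      abel
  have hHm : ∀ j, (∑ i ∈ Finset.range j, hf (F i)) ∈ m :=
    fun j => Ideal.sum_mem m (fun i _ => hfm (F i))
  have hFtend : Filter.Tendsto F Filter.atTop (nhds 0) := by
    rw [tendsto_zero_iff_norm_tendsto_zero]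
    refine squeeze_zero (fun j => norm_nonneg _) hFnorm ?_
    simpa using (tendsto_pow_atTop_nhds_zero_of_lt_one (norm_nonneg π) hπ1).mul_const ‖f‖
  have hHtend : Filter.Tendsto (fun j => ∑ i ∈ Finset.range j, hf (F i)) Filter.atTop
      (nhds (f - algebraMap k (BoundedContinuousFunction X k) Ctot)) := by
    have hmain : Filter.Tendsto
        (fun j => f - algebraMap k (BoundedContinuousFunction X k)
          (∑ i ∈ Finset.range j, cf (F i)) - F j) Filter.atTop
        (nhds (f - algebraMap k (BoundedContinuousFunction X k) Ctot - 0)) := by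
      refine Filter.Tendsto.sub (Filter.Tendsto.sub tendsto_const_nhds ?_) hFtend
      exact ((continuous_algebraMap k (BoundedContinuousFunction X k)).tendsto Ctot).comp htend
    rw [sub_zero] at hmain
    exact hmain.congr (fun j => (hid j).symm)
  haveI := hm
  have hclosed : IsClosed (m : Set (BoundedContinuousFunction X k)) :=
    Ideal.IsMaximal.isClosed
  exact ⟨Ctot, hclosed.mem_of_tendsto hHtend (Filter.Eventually.of_forall hHm)⟩

end Codim1Aux
end

/-- If `k` is a finite field with the trivial absolute value or a local
field, then every maximal ideal `m` of `C_bd(X,k)` has codimension 1: the composite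
`k → C_bd(X,k) → C_bd(X,k)/m` is bijective. -/
theorem maximal_ideal_codimension_one {X : Type*} [TopologicalSpace X]
    (k : Type*) [NormedField k] [CompleteSpace k] [IsUltrametricDist k]
    (hk : IsTriviallyValuedFiniteField k ∨ IsNALocalField k)
    (m : Ideal (BoundedContinuousFunction X k)) (hm : m.IsMaximal) :
    Function.Bijective (fun a : k =>
      Ideal.Quotient.mk m (algebraMap k (BoundedContinuousFunction X k) a)) := by
  haveI := hm
  constructor
  · have hinj : Function.Injective
        ((Ideal.Quotient.mk m).comp (algebraMap k (BoundedContinuousFunction X k))) :=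
      RingHom.injective _
    exact fun a b hab => hinj hab
  · intro q
    obtain ⟨g, rfl⟩ := Ideal.Quotient.mk_surjective q
    have hex : ∃ c : k, g - algebraMap k (BoundedContinuousFunction X k) c ∈ m := by
      rcases hk with ⟨hfin, htriv⟩ | hloc
      · exact Codim1Aux.exists_triv hfin htriv m hm g
      · exact Codim1Aux.exists_local hloc m hm g
    obtain ⟨c, hc⟩ := hex
    refine ⟨c, ?_⟩
    have hc' : algebraMap k (BoundedContinuousFunction X k) c - g ∈ m := by
      have := neg_mem hc
      rwa [neg_sub] at this
    exact (Ideal.Quotient.eq (I := m)).mpr hc'
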